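/- Let S ⊆ ℝ³ be the simplex with vertices (-1,0,0), (1,0,0), (0,-1,1), (0,1,1), and let D = {(x,y) ∈ ℝ² : |x| + |y| ≤ 1}. Define F : D → Set ℝ by F(x,y) = {z ∈ ℝ : (x,y,z) ∈ S}. Then F is a convex multifunction with nonempty compact convex values, but F admits no affine selection: there is no affine map f : ℝ² → ℝ with f(p) ∈ F(p) for all p ∈ D. -/

import Mathlib

open Pointwise

noncomputable def olsenS : Set (Fin 3 → ℝ) :=
  convexHull ℝ {![(-1:ℝ), 0, 0], ![1, 0, 0], ![0, -1, 1], ![0, 1, 1]}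

lemma mem_olsenS (x y z : ℝ) : ![x, y, z] ∈ olsenS ↔ |y| ≤ z ∧ z + |x| ≤ 1 := by
  constructor
  · intro h
    have hsub : olsenS ⊆ {v : Fin 3 → ℝ | |v 1| ≤ v 2 ∧ v 2 + |v 0| ≤ 1} := by
      apply convexHull_min
      · intro v hv
        simp only [Set.mem_insert_iff, Set.mem_singleton_iff] at hv
        rcases hv with rfl | rfl | rfl | rfl <;> norm_num [Matrix.cons_val_two, Matrix.tail_cons, Matrix.head_cons]
      · rintro u hu v hv a b ha hb hab
        constructor
        · calc |(a • u + b • v) 1| = |a * u 1 + b * v 1| := by simp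
            _ ≤ |a * u 1| + |b * v 1| := abs_add_le _ _
            _ = a * |u 1| + b * |v 1| := by
                rw [abs_mul, abs_mul, abs_of_nonneg ha, abs_of_nonneg hb]
            _ ≤ a * u 2 + b * v 2 := by
                gcongr; exacts [hu.1, hv.1]
            _ = (a • u + b • v) 2 := by simp
        · calc (a • u + b • v) 2 + |(a • u + b • v) 0|
              = a * u 2 + b * v 2 + |a * u 0 + b * v 0| := by simp
            _ ≤ a * u 2 + b * v 2 + (a * |u 0| + b * |v 0|) := by
                refine add_le_add (le_refl _) ((abs_add_le _ _).trans ?_)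
                rw [abs_mul, abs_mul, abs_of_nonneg ha, abs_of_nonneg hb]
            _ = a * (u 2 + |u 0|) + b * (v 2 + |v 0|) := by ring
            _ ≤ a * 1 + b * 1 := by gcongr; exacts [hu.2, hv.2]
            _ = 1 := by rw [mul_one, mul_one, hab]
    exact hsub h
  · rintro ⟨h1, h2⟩
    have hx := abs_nonneg x
    have hy := abs_nonneg y
    set a := (1 - z - x) / 2 with ha
    set b := (1 - z + x) / 2 with hb
    set c := (z - y) / 2 with hc
    set d := (z + y) / 2 with hd
    have hxle : |x| ≤ 1 - z := by linarith
    have hyle : |y| ≤ z := h1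
    have h' := abs_le.mp hxle
    have h'' := abs_le.mp hyle
    have key : ![x, y, z] =
        ∑ i : Fin 4, (![a, b, c, d] i) • (![![(-1:ℝ),0,0], ![1,0,0], ![0,-1,1], ![0,1,1]] i) := by
      rw [Fin.sum_univ_four]
      funext j
      fin_cases j <;> simp [ha, hb, hc, hd] <;> ring
    rw [key]
    apply (convex_convexHull ℝ _).sum_mem
    · intro i _
      fin_cases i <;> simp [ha, hb, hc, hd] <;> linarith [h'.1, h'.2, h''.1, h''.2]
    · rw [Fin.sum_univ_four]; simp [ha, hb, hc, hd]; ring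
    · intro i _
      apply subset_convexHull
      fin_cases i <;> simp

def olsenD : Set (Fin 2 → ℝ) := {p | |p 0| + |p 1| ≤ 1}

noncomputable def olsenF (p : Fin 2 → ℝ) : Set ℝ :=
  {z | ![p 0, p 1, z] ∈ olsenS}

lemma olsenF_eq (p : Fin 2 → ℝ) : olsenF p = Set.Icc (|p 1|) (1 - |p 0|) := by
  ext z
  simp only [olsenF, Set.mem_setOf_eq, mem_olsenS, Set.mem_Icc]
  constructor <;> rintro ⟨h1, h2⟩ <;> constructor <;> linarith

theorem stmt_19 :
    (∀ p ∈ olsenD, (olsenF p).Nonempty ∧ IsCompact (olsenF p) ∧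
        Convex ℝ (olsenF p)) ∧
    (∀ p ∈ olsenD, ∀ q ∈ olsenD, ∀ t ∈ Set.Icc (0:ℝ) 1,
        t • olsenF p + (1 - t) • olsenF q ⊆ olsenF (t • p + (1 - t) • q)) ∧
    ¬ ∃ f : (Fin 2 → ℝ) →ᵃ[ℝ] ℝ, ∀ p ∈ olsenD, f p ∈ olsenF p := by
  refine ⟨?_, ?_, ?_⟩
  · intro p hp
    rw [olsenF_eq]
    have : |p 0| + |p 1| ≤ 1 := hp
    exact ⟨⟨|p 1|, le_refl _, by linarith⟩, isCompact_Icc, convex_Icc _ _⟩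
  · intro p hp q hq t ht
    rintro z ⟨z1, hz1, z2, hz2, rfl⟩
    rw [olsenF_eq] at *
    obtain ⟨u, hu, rfl⟩ := hz1
    obtain ⟨v, hv, rfl⟩ := hz2
    simp only [Set.mem_Icc, smul_eq_mul] at *
    obtain ⟨ht0, ht1⟩ := ht
    have h1t : 0 ≤ 1 - t := by linarith
    constructor
    · calc |(t • p + (1 - t) • q) 1| = |t * p 1 + (1 - t) * q 1| := by simp
        _ ≤ |t * p 1| + |(1 - t) * q 1| := abs_add_le _ _
        _ = t * |p 1| + (1 - t) * |q 1| := by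
            rw [abs_mul, abs_mul, abs_of_nonneg ht0, abs_of_nonneg h1t]
        _ ≤ t * u + (1 - t) * v := by gcongr; exacts [hu.1, hv.1]
    · have habs : |(t • p + (1 - t) • q) 0| ≤ t * |p 0| + (1 - t) * |q 0| := by
        calc |(t • p + (1 - t) • q) 0| = |t * p 0 + (1 - t) * q 0| := by simp
          _ ≤ |t * p 0| + |(1 - t) * q 0| := abs_add_le _ _
          _ = t * |p 0| + (1 - t) * |q 0| := by
              rw [abs_mul, abs_mul, abs_of_nonneg ht0, abs_of_nonneg h1t]
      have h1 : u ≤ 1 - |p 0| := hu.2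
      have h2 : v ≤ 1 - |q 0| := hv.2
      nlinarith
  · rintro ⟨f, hf⟩
    have hmem : ∀ p ∈ olsenD, f p ∈ Set.Icc (|p 1|) (1 - |p 0|) := by
      intro p hp; rw [← olsenF_eq]; exact hf p hp
    have h1 : f ![1, 0] = 0 := by
      have := hmem ![1, 0] (by simp [olsenD]); simpa using this
    have h2 : f ![-1, 0] = 0 := by
      have := hmem ![-1, 0] (by simp [olsenD]); simpa using this
    have h3 : f ![0, 1] = 1 := by
      have := hmem ![0, 1] (by simp [olsenD]); simpa using this
    have h4 : f ![0, -1] = 1 := by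
      have := hmem ![0, -1] (by simp [olsenD]); simpa using this
    have e1 : midpoint ℝ (![1, 0] : Fin 2 → ℝ) ![-1, 0] = ![0, 0] := by
      funext j; fin_cases j <;> simp [midpoint_eq_smul_add]
    have e2 : midpoint ℝ (![0, 1] : Fin 2 → ℝ) ![0, -1] = ![0, 0] := by
      funext j; fin_cases j <;> simp [midpoint_eq_smul_add]
    have k1 := f.map_midpoint (![1, 0] : Fin 2 → ℝ) ![-1, 0]
    have k2 := f.map_midpoint (![0, 1] : Fin 2 → ℝ) ![0, -1]
    rw [e1, h1, h2] at k1
    rw [e2, h3, h4] at k2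
    rw [k1] at k2
    simp [midpoint_eq_smul_add] at k2
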